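/- With L(j,t) as above, for all integers 0 ≤ t ≤ j and all n ≥ k, L(j+n, t+n) = Σ_{i=1}^{k} λ_i L(j+n−i, t+n−i); that is, for fixed difference j−t, the sequence n ↦ L(j+n, t+n) eventually satisfies the linear recurrence a. -/

import Mathlib

/-- if `L(j,0) = 1` and
`L(j,t) = ∑_{i=1}^t λ_i L(j-i,t-i) + ∑_{i=t+1}^j λ_i` for `1 ≤ t ≤ j`, then
for `0 ≤ t ≤ j` and `n ≥ k`,
`L(j+n, t+n) = ∑_{i=1}^k λ_i L(j+n-i, t+n-i)`; i.e. for fixed `j - t` the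
sequence `n ↦ L(j+n, t+n)` eventually satisfies the linear recurrence `a`. -/
theorem stmt12 (k : ℕ) (lam : ℕ → ℕ) (hk : 1 ≤ k)
    (h1 : 1 ≤ lam 1) (hkpos : 1 ≤ lam k) (hzero : ∀ i, k < i → lam i = 0)
    (hΛ : 2 ≤ ∑ i ∈ Finset.Icc 1 k, lam i)
    (L : ℕ → ℕ → ℚ)
    (hL0 : ∀ j : ℕ, L j 0 = 1)
    (hLrec : ∀ j t : ℕ, 1 ≤ t → t ≤ j →
      L j t = (∑ i ∈ Finset.Icc 1 t, (lam i : ℚ) * L (j - i) (t - i))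
        + ∑ i ∈ Finset.Icc (t + 1) j, (lam i : ℚ)) :
    ∀ j t n : ℕ, t ≤ j → k ≤ n →
      L (j + n) (t + n) = ∑ i ∈ Finset.Icc 1 k, (lam i : ℚ) * L (j + n - i) (t + n - i) := by
  intro j t n htj hkn
  rw [hLrec (j + n) (t + n) (by omega) (by omega)]
  have e2 : ∑ i ∈ Finset.Icc (t + n + 1) (j + n), (lam i : ℚ) = 0 := by
    apply Finset.sum_eq_zero
    intro x hx
    simp only [Finset.mem_Icc] at hx
    rw [hzero x (by omega)]; simp
  rw [e2, add_zero]
  symm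
  apply Finset.sum_subset
  · intro x hx; simp only [Finset.mem_Icc] at *; omega
  · intro x hx hnx
    simp only [Finset.mem_Icc] at hx hnx
    rw [hzero x (by omega)]; simp
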